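/- Bias decomposition with emergent pseudo confounding: if X = γ₀* + γ₁*X^ep + γ₂*Q^ep + γ_z* z' + U* (calibration model) and E[Y|X,z'] = β₀ + β₁X + β_z z' (correct model), then the coefficient of X^ep in the linear projection of Y onto (X^ep, z') equals β₁(γ₁* + γ₂*ρ_{X^ep,Q^ep|z'} + ρ_{X^ep,U*|z'}), where ρ_{A,B|z'} denotes the partial regression coefficient of B on A given z'. -/

import Mathlib

open MeasureTheory ProbabilityTheory

noncomputable def expec {Ω : Type*} [MeasurableSpace Ω] (μ : Measure Ω) (f : Ω → ℝ) : ℝ :=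
  ∫ ω, f ω ∂μ

noncomputable def varm {Ω : Type*} [MeasurableSpace Ω] (μ : Measure Ω) (f : Ω → ℝ) : ℝ :=
  expec μ (fun ω => (f ω - expec μ f) ^ 2)

noncomputable def covm {Ω : Type*} [MeasurableSpace Ω] (μ : Measure Ω) (f g : Ω → ℝ) : ℝ :=
  expec μ (fun ω => (f ω - expec μ f) * (g ω - expec μ g))

private lemma integrable_mul_of_l2 {Ω : Type*} [MeasurableSpace Ω] {μ : Measure Ω}
    {f g : Ω → ℝ} (hf : MemLp f 2 μ) (hg : MemLp g 2 μ) :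
    Integrable (fun ω => f ω * g ω) μ := by
  have h1 := (hf.add hg).integrable_sq
  have h2 := hf.integrable_sq
  have h3 := hg.integrable_sq
  have h : (fun ω => f ω * g ω)
      = fun ω => (1/2 : ℝ) * (((f ω + g ω) ^ 2 - f ω ^ 2) - g ω ^ 2) := by
    funext ω; ring
  rw [h]
  exact ((h1.sub h2).sub h3).const_mul _

private lemma covm_linear {Ω : Type*} [MeasurableSpace Ω] (μ : Measure Ω)
    [IsProbabilityMeasure μ] (f g h u e : Ω → ℝ) (a b c d : ℝ)
    (hf : MemLp f 2 μ) (hg : MemLp g 2 μ) (hh : MemLp h 2 μ)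
    (hu : MemLp u 2 μ) (he : MemLp e 2 μ) :
    covm μ f (fun ω => d + a * g ω + b * h ω + c * u ω + e ω)
      = a * covm μ f g + b * covm μ f h + c * covm μ f u + covm μ f e := by
  have hgi := hg.integrable one_le_two
  have hhi := hh.integrable one_le_two
  have hui := hu.integrable one_le_two
  have hei := he.integrable one_le_two
  have I1 : Integrable (fun ω => d + a * g ω) μ :=
    (integrable_const d).add (hgi.const_mul a)
  have I2 : Integrable (fun ω => d + a * g ω + b * h ω) μ :=
    I1.add (hhi.const_mul b)
  have I3 : Integrable (fun ω => d + a * g ω + b * h ω + c * u ω) μ :=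
    I2.add (hui.const_mul c)
  have hE : expec μ (fun ω => d + a * g ω + b * h ω + c * u ω + e ω)
      = d + a * expec μ g + b * expec μ h + c * expec μ u + expec μ e := by
    simp only [expec]
    rw [integral_add I3 hei, integral_add I2 (hui.const_mul c),
      integral_add I1 (hhi.const_mul b),
      integral_add (integrable_const d) (hgi.const_mul a),
      integral_const_mul, integral_const_mul, integral_const_mul]
    simp
  -- centered products integrable
  have hfc : MemLp (fun ω => f ω - expec μ f) 2 μ := hf.sub (memLp_const _)
  have hgc : MemLp (fun ω => g ω - expec μ g) 2 μ := hg.sub (memLp_const _)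
  have hhc : MemLp (fun ω => h ω - expec μ h) 2 μ := hh.sub (memLp_const _)
  have huc : MemLp (fun ω => u ω - expec μ u) 2 μ := hu.sub (memLp_const _)
  have hec : MemLp (fun ω => e ω - expec μ e) 2 μ := he.sub (memLp_const _)
  have ifg := integrable_mul_of_l2 hfc hgc
  have ifh := integrable_mul_of_l2 hfc hhc
  have ifu := integrable_mul_of_l2 hfc huc
  have ife := integrable_mul_of_l2 hfc hec
  have J1 : Integrable (fun ω => a * ((f ω - expec μ f) * (g ω - expec μ g))
      + b * ((f ω - expec μ f) * (h ω - expec μ h))) μ :=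
    (ifg.const_mul a).add (ifh.const_mul b)
  have J2 : Integrable (fun ω => a * ((f ω - expec μ f) * (g ω - expec μ g))
      + b * ((f ω - expec μ f) * (h ω - expec μ h))
      + c * ((f ω - expec μ f) * (u ω - expec μ u))) μ :=
    J1.add (ifu.const_mul c)
  have hpt : (fun ω => (f ω - expec μ f) *
      ((d + a * g ω + b * h ω + c * u ω + e ω) -
        (d + a * expec μ g + b * expec μ h + c * expec μ u + expec μ e)))
      = fun ω => a * ((f ω - expec μ f) * (g ω - expec μ g))
        + b * ((f ω - expec μ f) * (h ω - expec μ h))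
        + c * ((f ω - expec μ f) * (u ω - expec μ u))
        + (f ω - expec μ f) * (e ω - expec μ e) := by
    funext ω; ring
  have eadd : ∀ (P Q : Ω → ℝ), Integrable P μ → Integrable Q μ →
      expec μ (fun ω => P ω + Q ω) = expec μ P + expec μ Q :=
    fun P Q hP hQ => integral_add hP hQ
  have ecmul : ∀ (r : ℝ) (P : Ω → ℝ),
      expec μ (fun ω => r * P ω) = r * expec μ P :=
    fun r P => integral_const_mul r P
  unfold covm
  rw [hE, hpt, eadd _ _ J2 ife, eadd _ _ J1 (ifu.const_mul c),
    eadd _ _ (ifg.const_mul a) (ifh.const_mul b), ecmul, ecmul, ecmul]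

theorem epc_bias_decomposition {Ω : Type*} [MeasurableSpace Ω]
    (μ : Measure Ω) [IsProbabilityMeasure μ]
    (Xep Qep Ust epsY X Y : Ω → ℝ) (γ0s γ1s γ2s γzs β0 β1 βz zc : ℝ)
    (hX : ∀ ω, X ω = γ0s + γ1s * Xep ω + γ2s * Qep ω + γzs * zc + Ust ω)
    (hY : ∀ ω, Y ω = β0 + β1 * X ω + βz * zc + epsY ω)
    (hXep2 : MemLp Xep 2 μ) (hQep2 : MemLp Qep 2 μ)
    (hU2 : MemLp Ust 2 μ) (heps2 : MemLp epsY 2 μ)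
    (hVar : 0 < varm μ Xep)
    (hcovEps : covm μ Xep epsY = 0) :
    covm μ Xep Y / varm μ Xep
      = β1 * (γ1s + γ2s * (covm μ Xep Qep / varm μ Xep)
          + covm μ Xep Ust / varm μ Xep) := by
  have hYeq : Y = fun ω => (β0 + β1 * γ0s + β1 * (γzs * zc) + βz * zc)
      + (β1 * γ1s) * Xep ω + (β1 * γ2s) * Qep ω + β1 * Ust ω + epsY ω := by
    funext ω; rw [hY, hX]; ring
  have hcov : covm μ Xep Y
      = (β1 * γ1s) * covm μ Xep Xep + (β1 * γ2s) * covm μ Xep Qep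
        + β1 * covm μ Xep Ust + covm μ Xep epsY := by
    rw [hYeq]
    exact covm_linear μ Xep Xep Qep Ust epsY _ _ _ _ hXep2 hXep2 hQep2 hU2 heps2
  have hvc : covm μ Xep Xep = varm μ Xep := by
    simp only [covm, varm, sq]
  rw [hcov, hcovEps, hvc]
  have hne : varm μ Xep ≠ 0 := ne_of_gt hVar
  field_simp
  ring
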